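/- In any edge-coloring c of K_n (n ≥ 6) in which every vertex v has d^c(v) ≥ 2 and which contains a rainbow bull graph B (with triangle xyz and pendant edges yu, zv, all five edges having distinct colors), there is a properly colored cycle on 5 vertices. -/
import Mathlib


/-- The edge-colored `K_n` contains a properly colored cycle on `k` vertices. -/
def HasPCCycle (n k : ℕ) (c : Fin n → Fin n → ℕ) : Prop :=
  ∃ p : Fin k → Fin n, Function.Injective p ∧
    ∀ i : Fin k,
      c (p i) (p ⟨(i.1 + 1) % k, Nat.mod_lt _ (Nat.lt_of_le_of_lt (Nat.zero_le _) i.isLt)⟩) ≠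
        c (p ⟨(i.1 + 1) % k, Nat.mod_lt _ (Nat.lt_of_le_of_lt (Nat.zero_le _) i.isLt)⟩)
          (p ⟨(i.1 + 2) % k, Nat.mod_lt _ (Nat.lt_of_le_of_lt (Nat.zero_le _) i.isLt)⟩)

/-- In the edge-coloring `c` of `K_n`, the color `a` is starred at the vertex `x`:
`a` appears on some edge, and every edge of color `a` is incident with `x`
(so the edges of color `a` form a star centered at `x`). -/
def Starred (n : ℕ) (c : Fin n → Fin n → ℕ) (a : ℕ) (x : Fin n) : Prop :=
  (∃ i j : Fin n, i ≠ j ∧ c i j = a) ∧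
    ∀ i j : Fin n, i ≠ j → c i j = a → i = x ∨ j = x

lemma buildPC {n : ℕ} (c : Fin n → Fin n → ℕ) (p0 p1 p2 p3 p4 : Fin n)
    (d01 : p0 ≠ p1) (d02 : p0 ≠ p2) (d03 : p0 ≠ p3) (d04 : p0 ≠ p4)
    (d12 : p1 ≠ p2) (d13 : p1 ≠ p3) (d14 : p1 ≠ p4)
    (d23 : p2 ≠ p3) (d24 : p2 ≠ p4) (d34 : p3 ≠ p4)
    (e0 : c p0 p1 ≠ c p1 p2) (e1 : c p1 p2 ≠ c p2 p3) (e2 : c p2 p3 ≠ c p3 p4)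
    (e3 : c p3 p4 ≠ c p4 p0) (e4 : c p4 p0 ≠ c p0 p1) : HasPCCycle n 5 c := by
  refine ⟨![p0, p1, p2, p3, p4], ?_, ?_⟩
  · intro i j h
    fin_cases i <;> fin_cases j <;> simp_all
  · intro i
    fin_cases i <;> simp_all

lemma starred_ne {n : ℕ} {c : Fin n → Fin n → ℕ} {a : ℕ} {v : Fin n} (h : Starred n c a v)
    {i j : Fin n} (hi : i ≠ v) (hj : j ≠ v) (hij : i ≠ j) : c i j ≠ a := by
  intro e
  rcases h.2 i j hij e with h' | h'
  exacts [hi h', hj h']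

lemma pick_starred {n : ℕ} {c : Fin n → Fin n → ℕ} {v : Fin n}
    (h : ∃ a b : ℕ, a ≠ b ∧ Starred n c a v ∧ Starred n c b v) (d : ℕ) :
    ∃ β, β ≠ d ∧ Starred n c β v := by
  obtain ⟨a, b, hab, ha, hb⟩ := h
  by_cases h' : a = d
  · exact ⟨b, fun e => hab (h'.trans e.symm), hb⟩
  · exact ⟨a, h', ha⟩

lemma starred_edge {n : ℕ} {c : Fin n → Fin n → ℕ} (hsym : ∀ i j, c i j = c j i)
    {a : ℕ} {v : Fin n} (h : Starred n c a v) : ∃ w, w ≠ v ∧ c v w = a := by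
  obtain ⟨⟨i, j, hij, hc⟩, hst⟩ := h
  rcases hst i j hij hc with h' | h'
  · subst h'
    exact ⟨j, Ne.symm hij, hc⟩
  · subst h'
    exact ⟨i, hij, (hsym _ i).trans hc⟩

lemma bull_main (n : ℕ) (c : Fin n → Fin n → ℕ) (hsym : ∀ i j, c i j = c j i)
    (hstar : ∀ w : Fin n, ∃ a b : ℕ, a ≠ b ∧ Starred n c a w ∧ Starred n c b w)
    (x y z u v : Fin n)
    (hxy : x ≠ y) (hxz : x ≠ z) (hxu : x ≠ u) (hxv : x ≠ v)
    (hyz : y ≠ z) (hyu : y ≠ u) (hyv : y ≠ v)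
    (hzu : z ≠ u) (hzv : z ≠ v) (huv : u ≠ v)
    (h1 : c x y ≠ c x z) (h2 : c x y ≠ c y z) (h3 : c x y ≠ c y u) (h4 : c x y ≠ c z v)
    (h5 : c x z ≠ c y z) (h6 : c x z ≠ c y u) (h7 : c x z ≠ c z v)
    (h8 : c y z ≠ c y u) (h9 : c y z ≠ c z v) (h10 : c y u ≠ c z v)
    (ht : c u v = c y u) :
    HasPCCycle n 5 c := by
  obtain ⟨β, hβ5, sβ⟩ := pick_starred (hstar v) (c z v)
  have hβ1 : c x y ≠ β := starred_ne sβ hxv hyv hxy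
  have hβ2 : c x z ≠ β := starred_ne sβ hxv hzv hxz
  have hβ3 : c y z ≠ β := starred_ne sβ hyv hzv hyz
  have hβ4 : c y u ≠ β := starred_ne sβ hyv huv hyu
  obtain ⟨w, hwv, hvw⟩ := starred_edge hsym sβ
  have hwz : w ≠ z := by
    intro h
    exact hβ5 (by rw [← hvw, h, hsym v z])
  have hwu : w ≠ u := by
    intro h
    exact hβ4.symm (by rw [← hvw, h, hsym v u, ht])
  by_cases hp1 : c x u = c x y
  · -- Branch A : c x u = c x y
    by_cases hwx : w = x
    · have hvx : c v x = β := by rw [← hwx]; exact hvw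
      -- L2 : cycle (x, v, z, y, u)
      refine buildPC c x v z y u hxv hxz hxy hxu hzv.symm hyv.symm huv.symm hyz.symm hzu hyu
        ?_ ?_ ?_ ?_ ?_
      · rw [hsym x v, hvx, hsym v z]; exact hβ5
      · rw [hsym v z, hsym z y]; exact h9.symm
      · rw [hsym z y]; exact h8
      · rw [hsym u x, hp1]; exact h3.symm
      · rw [hsym u x, hp1, hsym x v, hvx]; exact hβ1
    · by_cases hwy : w = y
      · have hvy : c v y = β := by rw [← hwy]; exact hvw
        -- L6 : cycle (y, v, z, x, u)
        refine buildPC c y v z x u hyv hyz hxy.symm hyu hzv.symm hxv.symm huv.symm hxz.symm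
          hzu hxu ?_ ?_ ?_ ?_ ?_
        · rw [hsym y v, hvy, hsym v z]; exact hβ5
        · rw [hsym v z, hsym z x]; exact h7.symm
        · rw [hsym z x, hp1]; exact h1.symm
        · rw [hp1, hsym u y]; exact h3
        · rw [hsym u y, hsym y v, hvy]; exact hβ4
      · -- w external
        by_cases hxw1 : c x w = c x y
        · by_cases hyw1 : c y w = c x y
          · by_cases hzw2 : c z w = c x z
            · by_cases huw4 : c u w = c y u
              · -- γ machinery
                obtain ⟨γ, hγ4, sγ⟩ := pick_starred (hstar u) (c y u)
                have hγ1 : c x y ≠ γ := starred_ne sγ hxu hyu hxy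
                have hγ2 : c x z ≠ γ := starred_ne sγ hxu hzu hxz
                have hγ3 : c y z ≠ γ := starred_ne sγ hyu hzu hyz
                have hγ5 : c z v ≠ γ := starred_ne sγ hzu (Ne.symm huv) hzv
                obtain ⟨w2, hw2u, huw2⟩ := starred_edge hsym sγ
                have hw2x : w2 ≠ x := by
                  intro h
                  exact hγ1 (by rw [← hp1, hsym x u, ← h]; exact huw2)
                have hw2y : w2 ≠ y := by
                  intro h
                  exact hγ4.symm (by rw [hsym y u, ← h]; exact huw2)
                have hw2v : w2 ≠ v := by
                  intro h
                  exact hγ4.symm (by rw [← ht, ← h]; exact huw2)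
                have hw2w : w2 ≠ w := by
                  intro h
                  exact hγ4.symm (by rw [← huw4, ← h]; exact huw2)
                by_cases hw2z : w2 = z
                · have huz : c u z = γ := by rw [← hw2z]; exact huw2
                  -- L15 : cycle (u, z, v, w, y)
                  refine buildPC c u z v w y hzu.symm huv hwu.symm hyu.symm hzv hwz.symm
                    hyz.symm hwv.symm hyv.symm hwy ?_ ?_ ?_ ?_ ?_
                  · rw [huz]; exact hγ5.symm
                  · rw [hvw]; exact hβ5.symm
                  · rw [hvw, hsym w y, hyw1]; exact hβ1.symm
                  · rw [hsym w y, hyw1]; exact h3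
                  · rw [huz]; exact hγ4.symm
                · by_cases hyw21 : c y w2 = c x y
                  · -- L17 : cycle (w2, u, v, z, y)
                    refine buildPC c w2 u v z y hw2u hw2v hw2z hw2y huv hzu.symm hyu.symm
                      hzv.symm hyv.symm hyz.symm ?_ ?_ ?_ ?_ ?_
                    · rw [hsym w2 u, huw2, ht]; exact hγ4
                    · rw [ht, hsym v z]; exact h10
                    · rw [hsym v z, hsym z y]; exact h9.symm
                    · rw [hsym z y, hyw21]; exact h2.symm
                    · rw [hyw21, hsym w2 u, huw2]; exact hγ1
                  · -- L16 : cycle (w2, u, v, w, y)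
                    refine buildPC c w2 u v w y hw2u hw2v hw2w hw2y huv hwu.symm hyu.symm
                      hwv.symm hyv.symm hwy ?_ ?_ ?_ ?_ ?_
                    · rw [hsym w2 u, huw2, ht]; exact hγ4
                    · rw [ht, hvw]; exact hβ4
                    · rw [hvw, hsym w y, hyw1]; exact hβ1.symm
                    · rw [hsym w y, hyw1]; exact fun h => hyw21 h.symm
                    · rw [hsym w2 u, huw2]; exact starred_ne sγ hyu hw2u hw2y.symm
              · -- L14 : cycle (w, v, z, y, u)
                refine buildPC c w v z y u hwv hwz hwy hwu hzv.symm hyv.symm huv.symm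
                  hyz.symm hzu hyu ?_ ?_ ?_ ?_ ?_
                · rw [hsym w v, hvw, hsym v z]; exact hβ5
                · rw [hsym v z, hsym z y]; exact h9.symm
                · rw [hsym z y]; exact h8
                · exact fun h => huw4 h.symm
                · rw [hsym w v, hvw]; exact starred_ne sβ huv hwv hwu.symm
            · -- L13 : cycle (w, v, u, x, z)
              refine buildPC c w v u x z hwv hwu hwx hwz huv.symm hxv.symm hzv.symm
                hxu.symm hzu.symm hxz ?_ ?_ ?_ ?_ ?_
              · rw [hsym w v, hvw, hsym v u, ht]; exact hβ4.symm
              · rw [hsym v u, ht, hsym u x, hp1]; exact h3.symm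
              · rw [hsym u x, hp1]; exact h1
              · exact fun h => hzw2 h.symm
              · rw [hsym w v, hvw]; exact starred_ne sβ hzv hwv hwz.symm
          · -- L12 : cycle (w, v, z, x, y)
            refine buildPC c w v z x y hwv hwz hwx hwy hzv.symm hxv.symm hyv.symm
              hxz.symm hyz.symm hxy ?_ ?_ ?_ ?_ ?_
            · rw [hsym w v, hvw, hsym v z]; exact hβ5
            · rw [hsym v z, hsym z x]; exact h7.symm
            · rw [hsym z x]; exact h1.symm
            · exact fun h => hyw1 h.symm
            · rw [hsym w v, hvw]; exact starred_ne sβ hyv hwv (Ne.symm hwy)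
        · -- L11 : cycle (w, v, z, y, x)
          refine buildPC c w v z y x hwv hwz hwy hwx hzv.symm hyv.symm hxv.symm
            hyz.symm hxz.symm hxy.symm ?_ ?_ ?_ ?_ ?_
          · rw [hsym w v, hvw, hsym v z]; exact hβ5
          · rw [hsym v z, hsym z y]; exact h9.symm
          · rw [hsym z y, hsym y x]; exact h2.symm
          · rw [hsym y x]; exact fun h => hxw1 h.symm
          · rw [hsym w v, hvw]; exact starred_ne sβ hxv hwv (Ne.symm hwx)
  · by_cases hp4 : c x u = c y u
    · -- Branch B : c x u = c y u
      obtain ⟨γ, hγ4, sγ⟩ := pick_starred (hstar u) (c y u)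
      have hγ1 : c x y ≠ γ := starred_ne sγ hxu hyu hxy
      have hγ2 : c x z ≠ γ := starred_ne sγ hxu hzu hxz
      have hγ3 : c y z ≠ γ := starred_ne sγ hyu hzu hyz
      have hγ5 : c z v ≠ γ := starred_ne sγ hzu (Ne.symm huv) hzv
      obtain ⟨w2, hw2u, huw2⟩ := starred_edge hsym sγ
      have hw2x : w2 ≠ x := by
        intro h
        exact hγ4.symm (by rw [← hp4, hsym x u, ← h]; exact huw2)
      have hw2y : w2 ≠ y := by
        intro h
        exact hγ4.symm (by rw [hsym y u, ← h]; exact huw2)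
      have hw2v : w2 ≠ v := by
        intro h
        exact hγ4.symm (by rw [← ht, ← h]; exact huw2)
      by_cases hwx : w = x
      · have hvx : c v x = β := by rw [← hwx]; exact hvw
        by_cases hw2z : w2 = z
        · have huz : c u z = γ := by rw [← hw2z]; exact huw2
          -- L3 : cycle (x, v, u, z, y)
          refine buildPC c x v u z y hxv hxu hxz hxy huv.symm hzv.symm hyv.symm
            hzu.symm hyu.symm hyz.symm ?_ ?_ ?_ ?_ ?_
          · rw [hsym x v, hvx, hsym v u, ht]; exact hβ4.symm
          · rw [hsym v u, ht, huz]; exact hγ4.symm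
          · rw [huz, hsym z y]; exact hγ3.symm
          · rw [hsym z y, hsym y x]; exact h2.symm
          · rw [hsym y x, hsym x v, hvx]; exact hβ1
        · by_cases hy3 : c y w2 = c y z
          · -- L5 : cycle (w2, u, v, x, y)
            refine buildPC c w2 u v x y hw2u hw2v hw2x hw2y huv hxu.symm hyu.symm
              hxv.symm hyv.symm hxy ?_ ?_ ?_ ?_ ?_
            · rw [hsym w2 u, huw2, ht]; exact hγ4
            · rw [ht, hvx]; exact hβ4
            · rw [hvx]; exact hβ1.symm
            · rw [hy3]; exact h2
            · rw [hy3, hsym w2 u, huw2]; exact hγ3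
          · -- L4 : cycle (w2, u, v, z, y)
            refine buildPC c w2 u v z y hw2u hw2v hw2z hw2y huv hzu.symm hyu.symm
              hzv.symm hyv.symm hyz.symm ?_ ?_ ?_ ?_ ?_
            · rw [hsym w2 u, huw2, ht]; exact hγ4
            · rw [ht, hsym v z]; exact h10
            · rw [hsym v z, hsym z y]; exact h9.symm
            · rw [hsym z y]; exact fun h => hy3 h.symm
            · rw [hsym w2 u, huw2]; exact starred_ne sγ hyu hw2u hw2y.symm
      · by_cases hwy : w = y
        · have hvy : c v y = β := by rw [← hwy]; exact hvw
          by_cases hw2z : w2 = z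
          · have huz : c u z = γ := by rw [← hw2z]; exact huw2
            -- L7 : cycle (y, v, u, z, x)
            refine buildPC c y v u z x hyv hyu hyz hxy.symm huv.symm hzv.symm hxv.symm
              hzu.symm hxu.symm hxz.symm ?_ ?_ ?_ ?_ ?_
            · rw [hsym y v, hvy, hsym v u, ht]; exact hβ4.symm
            · rw [hsym v u, ht, huz]; exact hγ4.symm
            · rw [huz, hsym z x]; exact hγ2.symm
            · rw [hsym z x]; exact h1.symm
            · rw [hsym y v, hvy]; exact hβ1
          · by_cases hxw21 : c x w2 = c x y
            · by_cases hzw23 : c z w2 = c y z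
              · -- L10 : cycle (w2, u, v, z, x)
                refine buildPC c w2 u v z x hw2u hw2v hw2z hw2x huv hzu.symm hxu.symm
                  hzv.symm hxv.symm hxz.symm ?_ ?_ ?_ ?_ ?_
                · rw [hsym w2 u, huw2, ht]; exact hγ4
                · rw [ht, hsym v z]; exact h10
                · rw [hsym v z, hsym z x]; exact h7.symm
                · rw [hsym z x, hxw21]; exact h1.symm
                · rw [hxw21, hsym w2 u, huw2]; exact hγ1
              · -- L9 : cycle (w2, u, v, y, z)
                refine buildPC c w2 u v y z hw2u hw2v hw2y hw2z huv hyu.symm hzu.symm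
                  hyv.symm hzv.symm hyz ?_ ?_ ?_ ?_ ?_
                · rw [hsym w2 u, huw2, ht]; exact hγ4
                · rw [ht, hvy]; exact hβ4
                · rw [hvy]; exact hβ3.symm
                · exact fun h => hzw23 h.symm
                · rw [hsym w2 u, huw2]; exact starred_ne sγ hzu hw2u (Ne.symm hw2z)
            · -- L8 : cycle (w2, u, v, y, x)
              refine buildPC c w2 u v y x hw2u hw2v hw2y hw2x huv hyu.symm hxu.symm
                hyv.symm hxv.symm hxy.symm ?_ ?_ ?_ ?_ ?_
              · rw [hsym w2 u, huw2, ht]; exact hγ4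
              · rw [ht, hvy]; exact hβ4
              · rw [hvy, hsym y x]; exact hβ1.symm
              · rw [hsym y x]; exact fun h => hxw21 h.symm
              · rw [hsym w2 u, huw2]; exact starred_ne sγ hxu hw2u hw2x.symm
        · -- w external, branch B
          by_cases hxw1 : c x w = c x y
          · by_cases hyw1 : c y w = c x y
            · by_cases hw2z : w2 = z
              · have huz : c u z = γ := by rw [← hw2z]; exact huw2
                -- L18 : cycle (w, v, u, z, y)
                refine buildPC c w v u z y hwv hwu hwz hwy huv.symm hzv.symm hyv.symm
                  hzu.symm hyu.symm hyz.symm ?_ ?_ ?_ ?_ ?_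
                · rw [hsym w v, hvw, hsym v u, ht]; exact hβ4.symm
                · rw [hsym v u, ht, huz]; exact hγ4.symm
                · rw [huz, hsym z y]; exact hγ3.symm
                · rw [hsym z y, hyw1]; exact h2.symm
                · rw [hyw1, hsym w v, hvw]; exact hβ1
              · by_cases hw2w : w2 = w
                · have huw : c u w = γ := by rw [← hw2w]; exact huw2
                  -- L19 : cycle (w, v, z, y, u)  (here c u w = γ)
                  refine buildPC c w v z y u hwv hwz hwy hwu hzv.symm hyv.symm huv.symm
                    hyz.symm hzu hyu ?_ ?_ ?_ ?_ ?_
                  · rw [hsym w v, hvw, hsym v z]; exact hβ5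
                  · rw [hsym v z, hsym z y]; exact h9.symm
                  · rw [hsym z y]; exact h8
                  · rw [huw]; exact hγ4.symm
                  · rw [hsym w v, hvw]; exact starred_ne sβ huv hwv hwu.symm
                · by_cases hy3 : c y w2 = c y z
                  · -- L21 : cycle (w2, u, v, w, y)
                    refine buildPC c w2 u v w y hw2u hw2v hw2w hw2y huv hwu.symm hyu.symm
                      hwv.symm hyv.symm hwy ?_ ?_ ?_ ?_ ?_
                    · rw [hsym w2 u, huw2, ht]; exact hγ4
                    · rw [ht, hvw]; exact hβ4
                    · rw [hvw, hsym w y, hyw1]; exact hβ1.symm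
                    · rw [hsym w y, hyw1, hy3]; exact h2
                    · rw [hy3, hsym w2 u, huw2]; exact hγ3
                  · -- L20 : cycle (w2, u, v, z, y)
                    refine buildPC c w2 u v z y hw2u hw2v hw2z hw2y huv hzu.symm hyu.symm
                      hzv.symm hyv.symm hyz.symm ?_ ?_ ?_ ?_ ?_
                    · rw [hsym w2 u, huw2, ht]; exact hγ4
                    · rw [ht, hsym v z]; exact h10
                    · rw [hsym v z, hsym z y]; exact h9.symm
                    · rw [hsym z y]; exact fun h => hy3 h.symm
                    · rw [hsym w2 u, huw2]; exact starred_ne sγ hyu hw2u hw2y.symm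
            · -- L12 : cycle (w, v, z, x, y)
              refine buildPC c w v z x y hwv hwz hwx hwy hzv.symm hxv.symm hyv.symm
                hxz.symm hyz.symm hxy ?_ ?_ ?_ ?_ ?_
              · rw [hsym w v, hvw, hsym v z]; exact hβ5
              · rw [hsym v z, hsym z x]; exact h7.symm
              · rw [hsym z x]; exact h1.symm
              · exact fun h => hyw1 h.symm
              · rw [hsym w v, hvw]; exact starred_ne sβ hyv hwv (Ne.symm hwy)
          · -- L11 : cycle (w, v, z, y, x)
            refine buildPC c w v z y x hwv hwz hwy hwx hzv.symm hyv.symm hxv.symm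
              hyz.symm hxz.symm hxy.symm ?_ ?_ ?_ ?_ ?_
            · rw [hsym w v, hvw, hsym v z]; exact hβ5
            · rw [hsym v z, hsym z y]; exact h9.symm
            · rw [hsym z y, hsym y x]; exact h2.symm
            · rw [hsym y x]; exact fun h => hxw1 h.symm
            · rw [hsym w v, hvw]; exact starred_ne sβ hxv hwv (Ne.symm hwx)
    · -- L1 : cycle (v, z, y, x, u)
      refine buildPC c v z y x u hzv.symm hyv.symm hxv.symm huv.symm hyz.symm hxz.symm
        hzu hxy.symm hyu hxu ?_ ?_ ?_ ?_ ?_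
      · rw [hsym v z, hsym z y]; exact h9.symm
      · rw [hsym z y, hsym y x]; exact h2.symm
      · rw [hsym y x]; exact fun h => hp1 h.symm
      · rw [ht]; exact hp4
      · rw [ht, hsym v z]; exact h10

/-- If an edge-coloring of `K_n` (`n ≥ 6`) has at least two colors starred at every
vertex and contains a rainbow bull graph (triangle `xyz` with pendant edges `yu` and
`zv`, the five edges having five pairwise distinct colors), then `K_n` contains a
properly colored `C_5`. -/
theorem pc_C5_of_rainbow_bull (n : ℕ) (hn : 6 ≤ n)
    (c : Fin n → Fin n → ℕ) (hsym : ∀ i j, c i j = c j i)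
    (hstar : ∀ w : Fin n, ∃ a b : ℕ, a ≠ b ∧ Starred n c a w ∧ Starred n c b w)
    (x y z u v : Fin n)
    (hxy : x ≠ y) (hxz : x ≠ z) (hxu : x ≠ u) (hxv : x ≠ v)
    (hyz : y ≠ z) (hyu : y ≠ u) (hyv : y ≠ v)
    (hzu : z ≠ u) (hzv : z ≠ v) (huv : u ≠ v)
    (h1 : c x y ≠ c x z) (h2 : c x y ≠ c y z) (h3 : c x y ≠ c y u) (h4 : c x y ≠ c z v)
    (h5 : c x z ≠ c y z) (h6 : c x z ≠ c y u) (h7 : c x z ≠ c z v)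
    (h8 : c y z ≠ c y u) (h9 : c y z ≠ c z v) (h10 : c y u ≠ c z v) :
    HasPCCycle n 5 c := by
  by_cases ht4 : c u v = c y u
  · exact bull_main n c hsym hstar x y z u v hxy hxz hxu hxv hyz hyu hyv hzu hzv huv
      h1 h2 h3 h4 h5 h6 h7 h8 h9 h10 ht4
  · by_cases ht5 : c u v = c z v
    · exact bull_main n c hsym hstar x z y v u hxz hxy hxv hxu hyz.symm hzv hzu hyv hyu
        huv.symm h1.symm (by rw [hsym z y]; exact h5) h7 h6
        (by rw [hsym z y]; exact h2) h4 h3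
        (by rw [hsym z y]; exact h9) (by rw [hsym z y]; exact h8) h10.symm
        (by rw [hsym v u]; exact ht5)
    · -- L0 : cycle (u, y, x, z, v)
      refine buildPC c u y x z v hyu.symm hxu.symm hzu.symm huv hxy.symm hyz hyv hxz
        hxv hzv ?_ ?_ ?_ ?_ ?_
      · rw [hsym u y, hsym y x]; exact h3.symm
      · rw [hsym y x]; exact h1
      · exact h7
      · rw [hsym v u]; exact fun h => ht5 h.symm
      · rw [hsym v u, hsym u y]; exact ht4
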